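/- Let L > 0. The function s \mapsto (L/\pi)^{2s} \cdot \zeta(2s) of a complex variable is complex differentiable at s = 0, and its derivative at s = 0 equals -\log 2 - \log L. Consequently the zeta-regularized spectral determinant exp(-\zeta_{Dir}'(0)) of the Dirichlet Laplacian on [0,L] equals 2L. -/

import Mathlib

open Complex

local notation "γ" => Real.eulerMascheroniConstant

/-- The reciprocal of `Gammaℝ`, written as an explicitly differentiable expression. -/
noncomputable def zetaAuxG (s : ℂ) : ℂ :=
  (Real.pi : ℂ) ^ (s / 2) * (s / 2 * (Complex.Gamma (s / 2 + 1))⁻¹)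

lemma zetaAuxG_eq (s : ℂ) : (Complex.Gammaℝ s)⁻¹ = zetaAuxG s := by
  rw [zetaAuxG, Complex.Gammaℝ_def, mul_inv, neg_div, Complex.cpow_neg, inv_inv,
    Complex.one_div_Gamma_eq_self_mul_one_div_Gamma_add_one]

/-- An everywhere-defined formula for the Riemann zeta function. -/
noncomputable def zetaAux (s : ℂ) : ℂ :=
  (completedRiemannZeta₀ s - (1 - s)⁻¹) * zetaAuxG s
    - (Real.pi : ℂ) ^ (s / 2) * (Complex.Gamma (s / 2 + 1))⁻¹ / 2

lemma zetaAux_eq : riemannZeta = zetaAux := by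
  funext s
  rcases eq_or_ne s 0 with rfl | hs
  · simp only [riemannZeta_zero, zetaAux, zetaAuxG]
    norm_num [Complex.Gamma_one]
  · rw [riemannZeta_def_of_ne_zero hs, completedRiemannZeta_eq, div_eq_mul_inv, zetaAuxG_eq,
      zetaAux, zetaAuxG]
    have key : (1 / s : ℂ) * ((Real.pi : ℂ) ^ (s / 2) * (s / 2 * (Complex.Gamma (s / 2 + 1))⁻¹))
        = (Real.pi : ℂ) ^ (s / 2) * (Complex.Gamma (s / 2 + 1))⁻¹ / 2 := by
      field_simp
    linear_combination -key

lemma hasDerivAt_pihalf : HasDerivAt (fun s : ℂ => (Real.pi : ℂ) ^ (s / 2))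
    (Complex.log Real.pi / 2) 0 := by
  have := ((hasDerivAt_id (0 : ℂ)).div_const 2).const_cpow (c := (Real.pi : ℂ))
    (Or.inl (by exact_mod_cast Real.pi_ne_zero))
  refine this.congr_deriv ?_
  simp only [id_eq, zero_mul, zero_div, Complex.cpow_zero]
  ring

lemma hasDerivAt_qinv : HasDerivAt (fun s : ℂ => (Complex.Gamma (s / 2 + 1))⁻¹)
    ((Real.eulerMascheroniConstant : ℂ) / 2) 0 := by
  have houter : HasDerivAt (fun w : ℂ => (Complex.Gamma w)⁻¹)
      (Real.eulerMascheroniConstant : ℂ) ((0 : ℂ) / 2 + 1) := by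
    have h1 : ((0 : ℂ) / 2 + 1) = 1 := by norm_num
    rw [h1]
    have := (Complex.hasDerivAt_Gamma_one).inv (by simp [Complex.Gamma_one])
    refine this.congr_deriv ?_
    simp [Complex.Gamma_one]
  have hinner : HasDerivAt (fun s : ℂ => s / 2 + 1) (1 / 2) 0 :=
    ((hasDerivAt_id (0 : ℂ)).div_const 2).add_const 1
  exact (houter.comp 0 hinner).congr_deriv (by ring : _ = (Real.eulerMascheroniConstant : ℂ) / 2)

lemma hasDerivAt_zetaAuxG : HasDerivAt zetaAuxG (1 / 2 : ℂ) 0 := by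
  have hmid : HasDerivAt (fun s : ℂ => s / 2 * (Complex.Gamma (s / 2 + 1))⁻¹) (1 / 2) 0 := by
    have := ((hasDerivAt_id (0 : ℂ)).div_const 2).mul hasDerivAt_qinv
    refine this.congr_deriv ?_
    norm_num [Complex.Gamma_one]
  have := hasDerivAt_pihalf.mul hmid
  refine this.congr_deriv ?_
  norm_num [Complex.Gamma_one]

lemma log4pi_add : Complex.log (4 * (Real.pi : ℂ)) + Complex.log (Real.pi : ℂ)
    = 2 * Complex.log (2 * (Real.pi : ℂ)) := by
  have h4 : (4 * (Real.pi : ℂ)) = ((4 * Real.pi : ℝ) : ℂ) := by push_cast; ring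
  have h2 : (2 * (Real.pi : ℂ)) = ((2 * Real.pi : ℝ) : ℂ) := by push_cast; ring
  rw [h4, h2, ← Complex.ofReal_log (by positivity), ← Complex.ofReal_log Real.pi_pos.le,
    ← Complex.ofReal_log (by positivity)]
  have hr : Real.log (4 * Real.pi) + Real.log Real.pi = 2 * Real.log (2 * Real.pi) := by
    rw [Real.log_mul (by norm_num) Real.pi_ne_zero,
      Real.log_mul (by norm_num) Real.pi_ne_zero,
      show (4 : ℝ) = 2 * 2 by norm_num, Real.log_mul (by norm_num) (by norm_num)]
    ring
  exact_mod_cast hr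

lemma hasDerivAt_riemannZeta_zero :
    HasDerivAt riemannZeta (-(Complex.log (2 * Real.pi)) / 2) 0 := by
  rw [zetaAux_eq]
  have hΛ : HasDerivAt completedRiemannZeta₀ (deriv completedRiemannZeta₀ 0) 0 :=
    (differentiable_completedZeta₀ 0).hasDerivAt
  have hr : HasDerivAt (fun s : ℂ => ((1 : ℂ) - s)⁻¹) 1 0 := by
    have := ((hasDerivAt_id (0 : ℂ)).const_sub 1).inv (by norm_num)
    refine this.congr_deriv ?_
    norm_num
  have h1 := (hΛ.sub hr).mul hasDerivAt_zetaAuxG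
  have h2 := (hasDerivAt_pihalf.mul hasDerivAt_qinv).div_const 2
  have h := h1.sub h2
  have hG0 : zetaAuxG 0 = 0 := by simp [zetaAuxG]
  have hΛ0 : completedRiemannZeta₀ 0
      = ((Real.eulerMascheroniConstant : ℂ) - Complex.log (4 * Real.pi)) / 2 + 1 := by
    rw [← completedRiemannZeta₀_one, ← completedRiemannZeta₀_one_sub 1]
    norm_num
  refine h.congr_deriv ?_
  rw [hG0, Pi.sub_apply, hΛ0]
  norm_num [Complex.Gamma_one]
  linear_combination (-(1:ℂ)/4) * log4pi_add

/-- For `L > 0`, the analytic continuation `s ↦ (L/π)^{2s} ζ(2s)` of the Dirichlet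
spectral zeta function on `[0,L]` is differentiable at `s = 0` with derivative
`-log 2 - log L`; consequently the zeta-regularized determinant
`exp(-ζ_Dir'(0))` equals `2L`. -/
theorem stmt_1 (L : ℝ) (hL : 0 < L) :
    HasDerivAt (fun s : ℂ => ((L / Real.pi : ℝ) : ℂ) ^ (2 * s) * riemannZeta (2 * s))
      ((-Real.log 2 - Real.log L : ℝ) : ℂ) 0 ∧
    Complex.exp (-((-Real.log 2 - Real.log L : ℝ) : ℂ)) = ((2 * L : ℝ) : ℂ) := by
  have ha : (0 : ℝ) < L / Real.pi := div_pos hL Real.pi_pos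
  constructor
  · have hP : HasDerivAt (fun w : ℂ => ((L / Real.pi : ℝ) : ℂ) ^ w)
        (Complex.log ((L / Real.pi : ℝ) : ℂ)) ((2 : ℂ) * 0) := by
      have h0 : (2 : ℂ) * 0 = 0 := by norm_num
      rw [h0]
      have := (hasDerivAt_id (0 : ℂ)).const_cpow (c := ((L / Real.pi : ℝ) : ℂ))
        (Or.inl (by exact_mod_cast ha.ne'))
      refine this.congr_deriv ?_
      simp
    have hZ : HasDerivAt riemannZeta (-(Complex.log (2 * Real.pi)) / 2) ((2 : ℂ) * 0) := by
      simpa using hasDerivAt_riemannZeta_zero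
    have hinner : HasDerivAt (fun s : ℂ => (2 : ℂ) * s) 2 0 := by
      simpa using (hasDerivAt_id (0 : ℂ)).const_mul 2
    have houter := hP.mul hZ
    have hcomp := houter.comp 0 hinner
    refine (by simpa [Function.comp_def, Pi.mul_def] using hcomp : HasDerivAt _ _ _).congr_deriv ?_
    have hlogq : Complex.log ((L : ℂ) / (Real.pi : ℂ)) = (Real.log (L / Real.pi) : ℂ) := by
      rw [← Complex.ofReal_div]
      exact (Complex.ofReal_log ha.le).symm
    have hlog2pi : Complex.log (2 * (Real.pi : ℂ)) = (Real.log (2 * Real.pi) : ℂ) := by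
      rw [show (2 : ℂ) * (Real.pi : ℂ) = ((2 * Real.pi : ℝ) : ℂ) by push_cast; ring]
      exact (Complex.ofReal_log (by positivity)).symm
    rw [riemannZeta_zero, hlogq, hlog2pi]
    push_cast [Real.log_div hL.ne' Real.pi_ne_zero,
      Real.log_mul (by norm_num : (2:ℝ) ≠ 0) Real.pi_ne_zero]
    ring
  · rw [← Complex.ofReal_neg, ← Complex.ofReal_exp]
    norm_num [Real.exp_add, Real.exp_log hL, Real.exp_log (by norm_num : (0:ℝ) < 2)]
    ring
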